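/- arXiv:2009.06832 — 2 statements merged into one kernel-verified Lean document; each statement's English description precedes it below -/
import Mathlib

section
/- Let γ ∈ (0,1), a ≥ 0, and let G be a standard normal random variable on a probability space (Ω, P). For every μ ∈ ℝ with |μ| ≤ a, one has P(|μ + G| > λ_γ(a)) = 2 − Φ(λ_γ(a) − μ) − Φ(λ_γ(a) + μ) ≤ γ, with equality when |μ| = a. -/
open MeasureTheory ProbabilityTheory Real Filter

/-- The cumulative distribution function `Φ` of the standard normal law `N(0,1)`. -/
noncomputable def Phi (x : ℝ) : ℝ := ((gaussianReal 0 1) (Set.Iic x)).toReal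

/-- The inverse `Φ⁻¹` of the standard normal cdf (on `(0,1)`). -/
noncomputable def PhiInv (y : ℝ) : ℝ := Function.invFun Phi y

lemma Phi_eq (x : ℝ) : Phi x = ∫ t in Set.Iic x, gaussianPDFReal 0 1 t := by
  rw [Phi, gaussianReal_apply_eq_integral 0 one_ne_zero, ENNReal.toReal_ofReal]
  exact setIntegral_nonneg measurableSet_Iic fun t _ => gaussianPDFReal_nonneg 0 1 t

lemma Phi_nonneg (x : ℝ) : 0 ≤ Phi x := ENNReal.toReal_nonneg

lemma Phi_le_one (x : ℝ) : Phi x ≤ 1 := by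
  rw [Phi]
  have := prob_le_one (μ := gaussianReal 0 1) (s := Set.Iic x)
  exact ENNReal.toReal_le_of_le_ofReal zero_le_one (by simpa using this)

lemma Phi_mono : Monotone Phi := by
  intro x y hxy
  rw [Phi, Phi]
  exact ENNReal.toReal_mono (measure_ne_top _ _) (measure_mono (Set.Iic_subset_Iic.mpr hxy))

lemma gauss_Iic (x : ℝ) : gaussianReal 0 1 (Set.Iic x) = ENNReal.ofReal (Phi x) := by
  rw [Phi, ENNReal.ofReal_toReal (measure_ne_top _ _)]

lemma gauss_singleton (x : ℝ) : gaussianReal 0 1 {x} = 0 :=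
  gaussianReal_absolutelyContinuous 0 one_ne_zero Real.volume_singleton

lemma gauss_Iio (x : ℝ) : gaussianReal 0 1 (Set.Iio x) = ENNReal.ofReal (Phi x) := by
  rw [← gauss_Iic]
  have : Set.Iic x = Set.Iio x ∪ {x} := by
    ext t; simp [le_iff_lt_or_eq]
  rw [this, measure_union (by simp) (measurableSet_singleton x), gauss_singleton, add_zero]

lemma gauss_Ioi (x : ℝ) : gaussianReal 0 1 (Set.Ioi x) = ENNReal.ofReal (1 - Phi x) := by
  have h := measure_compl (μ := gaussianReal 0 1) (measurableSet_Iic (a := x)) (measure_ne_top _ _)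
  rw [Set.compl_Iic] at h
  rw [h, measure_univ, gauss_Iic, ENNReal.ofReal_sub _ (Phi_nonneg x), ENNReal.ofReal_one]

lemma Phi_neg (x : ℝ) : Phi (-x) = 1 - Phi x := by
  have hmap : (gaussianReal 0 1).map (fun t : ℝ => -t) = gaussianReal 0 1 := by
    have h := gaussianReal_map_const_mul (μ := 0) (v := 1) (-1)
    have h1 : (⟨(-1:ℝ)^2, sq_nonneg _⟩ : NNReal) * 1 = 1 := by ext; norm_num
    rw [mul_zero] at h
    erw [h1] at h
    simp only [neg_one_mul] at h
    exact h
  have : gaussianReal 0 1 (Set.Iic (-x)) = gaussianReal 0 1 (Set.Ici x) := by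
    conv_lhs => rw [← hmap]
    rw [Measure.map_apply measurable_neg measurableSet_Iic]
    congr 1
    ext t; simp
  have h2 : gaussianReal 0 1 (Set.Ici x) = ENNReal.ofReal (1 - Phi x) := by
    have : Set.Ici x = Set.Ioi x ∪ {x} := by ext t; simp [le_iff_lt_or_eq, eq_comm]
    rw [this, measure_union (by simp) (measurableSet_singleton x), gauss_singleton, add_zero,
      gauss_Ioi]
  rw [Phi, this, h2, ENNReal.toReal_ofReal (by linarith [Phi_le_one x])]

lemma continuous_gpdf : Continuous (gaussianPDFReal 0 1) := by
  unfold gaussianPDFReal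
  fun_prop

lemma hasDerivAt_Phi (x : ℝ) : HasDerivAt Phi (gaussianPDFReal 0 1 x) x := by
  have heq : Phi = fun y => Phi 0 + ∫ t in (0:ℝ)..y, gaussianPDFReal 0 1 t := by
    funext y
    rw [← intervalIntegral.integral_Iic_sub_Iic
      ((integrable_gaussianPDFReal 0 1).integrableOn) ((integrable_gaussianPDFReal 0 1).integrableOn),
      ← Phi_eq, ← Phi_eq]
    ring
  rw [heq]
  exact (intervalIntegral.integral_hasDerivAt_right
    ((integrable_gaussianPDFReal 0 1).intervalIntegrable)
    (continuous_gpdf.stronglyMeasurableAtFilter _ _)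
    continuous_gpdf.continuousAt).const_add _

lemma gpdf_anti {x y : ℝ} (h : x ^ 2 ≤ y ^ 2) :
    gaussianPDFReal 0 1 y ≤ gaussianPDFReal 0 1 x := by
  unfold gaussianPDFReal
  have : ((1 : NNReal) : ℝ) = 1 := rfl
  apply mul_le_mul_of_nonneg_left _ (by positivity)
  apply Real.exp_le_exp.mpr
  rw [this]
  nlinarith

lemma hasDerivAt_g (lam μ : ℝ) :
    HasDerivAt (fun μ => Phi (lam - μ) + Phi (lam + μ))
      (-(gaussianPDFReal 0 1 (lam - μ)) + gaussianPDFReal 0 1 (lam + μ)) μ := by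
  have h1 : HasDerivAt (fun μ : ℝ => Phi (lam - μ)) (-(gaussianPDFReal 0 1 (lam - μ))) μ := by
    have := (hasDerivAt_Phi (lam - μ)).comp μ ((hasDerivAt_id μ).const_sub lam)
    simpa [Function.comp_def] using this
  have h2 : HasDerivAt (fun μ : ℝ => Phi (lam + μ)) (gaussianPDFReal 0 1 (lam + μ)) μ := by
    have := (hasDerivAt_Phi (lam + μ)).comp μ ((hasDerivAt_id μ).const_add lam)
    simpa [Function.comp_def] using this
  exact h1.add h2

lemma key_anti {lam : ℝ} (hl : 0 ≤ lam) (a : ℝ) :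
    AntitoneOn (fun μ => Phi (lam - μ) + Phi (lam + μ)) (Set.Icc 0 a) := by
  apply antitoneOn_of_deriv_nonpos (convex_Icc 0 a)
  · exact fun μ _ => (hasDerivAt_g lam μ).continuousAt.continuousWithinAt
  · exact fun μ _ => (hasDerivAt_g lam μ).differentiableAt.differentiableWithinAt
  · intro μ hμ
    rw [interior_Icc, Set.mem_Ioo] at hμ
    rw [(hasDerivAt_g lam μ).deriv]
    have : gaussianPDFReal 0 1 (lam + μ) ≤ gaussianPDFReal 0 1 (lam - μ) := by
      apply gpdf_anti
      nlinarith [hμ.1]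
    linarith

/-- with λ_γ(a) the unique solution of 2 - Φ(x-a) - Φ(x+a) = γ, for any μ
with |μ| ≤ a one has P(|μ + G| > λ_γ(a)) = 2 - Φ(λ_γ(a) - μ) - Φ(λ_γ(a) + μ) ≤ γ, with
equality when |μ| = a. -/
theorem stmt8 {Ω : Type*} [MeasurableSpace Ω] (P : Measure Ω) [IsProbabilityMeasure P]
    (γ a : ℝ) (hγ : γ ∈ Set.Ioo (0 : ℝ) 1) (ha : 0 ≤ a)
    (G : Ω → ℝ) (hG : Measurable G) (hGdist : Measure.map G P = gaussianReal 0 1)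
    (lam : ℝ) (hlam : 2 - Phi (lam - a) - Phi (lam + a) = γ)
    (μ : ℝ) (hμ : |μ| ≤ a) :
    P {ω | lam < |μ + G ω|} = ENNReal.ofReal (2 - Phi (lam - μ) - Phi (lam + μ)) ∧
      2 - Phi (lam - μ) - Phi (lam + μ) ≤ γ ∧
      (|μ| = a → 2 - Phi (lam - μ) - Phi (lam + μ) = γ) := by
  obtain ⟨hγ0, hγ1⟩ := hγ
  have hlampos : 0 < lam := by
    by_contra h
    push_neg at h
    have h1 : Phi (lam - a) ≤ Phi (-a) := Phi_mono (by linarith)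
    have h2 : Phi (lam + a) ≤ Phi a := Phi_mono (by linarith)
    have h3 := Phi_neg a
    linarith
  have hsymm : ∀ m : ℝ,
      2 - Phi (lam - m) - Phi (lam + m) = 2 - Phi (lam - |m|) - Phi (lam + |m|) := by
    intro m
    rcases abs_cases m with ⟨h1, _⟩ | ⟨h1, _⟩
    · rw [h1]
    · rw [h1, sub_neg_eq_add, ← sub_eq_add_neg]
      ring
  refine ⟨?_, ?_, ?_⟩
  · -- measure computation
    have hset : {x : ℝ | lam < |μ + x|} = Set.Iio (-lam - μ) ∪ Set.Ioi (lam - μ) := by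
      ext x
      simp only [Set.mem_setOf_eq, Set.mem_union, Set.mem_Iio, Set.mem_Ioi]
      rw [lt_abs]
      constructor
      · rintro (h | h)
        · right; linarith
        · left; linarith
      · rintro (h | h)
        · right; linarith
        · left; linarith
    have hdisj : Disjoint (Set.Iio (-lam - μ)) (Set.Ioi (lam - μ)) :=
      (Set.Iio_disjoint_Ici (by linarith)).mono_right Set.Ioi_subset_Ici_self
    have hSmeas : MeasurableSet {x : ℝ | lam < |μ + x|} := by
      rw [hset]; exact measurableSet_Iio.union measurableSet_Ioi
    have h1 : P {ω | lam < |μ + G ω|} = gaussianReal 0 1 {x : ℝ | lam < |μ + x|} := by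
      rw [← hGdist, Measure.map_apply hG hSmeas]
      rfl
    rw [h1, hset, measure_union hdisj measurableSet_Ioi, gauss_Iio, gauss_Ioi,
      ← ENNReal.ofReal_add (Phi_nonneg _) (by linarith [Phi_le_one (lam - μ)])]
    congr 1
    have h2 : Phi (-lam - μ) = 1 - Phi (lam + μ) := by
      rw [show -lam - μ = -(lam + μ) by ring, Phi_neg]
    linarith
  · -- inequality
    have hkey := key_anti hlampos.le a ⟨abs_nonneg μ, hμ⟩
      (Set.right_mem_Icc.mpr (le_trans (abs_nonneg μ) hμ)) hμ
    simp only at hkey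
    rw [hsymm μ]
    linarith
  · intro h
    rw [hsymm μ, h]
    exact hlam
end

section
/- For every fixed γ ∈ (0,1), the RDT threshold satisfies lim_{a → ∞} (λ_γ(a) − a) = Φ⁻¹(1 − γ). -/
open MeasureTheory ProbabilityTheory Real Filter

lemma Phi_eq_s11 : Phi = ⇑(cdf (gaussianReal 0 1)) :=
  funext fun x => ((cdf_eq_real _ x).trans (measureReal_def _ _)).symm

lemma Phi_strictMono : StrictMono Phi := by
  intro x y hxy
  have hmeas : (cdf (gaussianReal 0 1)).measure = gaussianReal 0 1 := measure_cdf _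
  have h1 : (cdf (gaussianReal 0 1)).measure (Set.Ioc x y)
      = ENNReal.ofReal (cdf (gaussianReal 0 1) y - cdf (gaussianReal 0 1) x) :=
    StieltjesFunction.measure_Ioc _ x y
  have h2 : (gaussianReal 0 1) (Set.Ioc x y) ≠ 0 := by
    intro h0
    have := gaussianReal_absolutelyContinuous' 0 (by norm_num : (1 : NNReal) ≠ 0) h0
    simp [Real.volume_Ioc, hxy] at this
    linarith
  rw [hmeas] at h1
  rw [Phi_eq_s11]
  have : 0 < cdf (gaussianReal 0 1) y - cdf (gaussianReal 0 1) x := by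
    by_contra h
    push_neg at h
    rw [h1, ENNReal.ofReal_eq_zero.mpr h] at h2
    exact h2 rfl
  linarith

lemma Phi_tendsto_atTop : Tendsto Phi atTop (nhds 1) := by
  rw [Phi_eq_s11]; exact tendsto_cdf_atTop _

lemma Phi_tendsto_atBot : Tendsto Phi atBot (nhds 0) := by
  rw [Phi_eq_s11]; exact tendsto_cdf_atBot _

lemma Phi_continuous : Continuous Phi := by
  rw [Phi_eq_s11]
  rw [continuous_iff_continuousAt]
  intro x
  set F := cdf (gaussianReal 0 1) with hF
  rw [F.mono.continuousAt_iff_leftLim_eq_rightLim, F.rightLim_eq]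
  have hmeas : F.measure = gaussianReal 0 1 := measure_cdf _
  have h1 : F.measure {x} = ENNReal.ofReal (F x - Function.leftLim F x) :=
    F.measure_singleton x
  have h0 : (gaussianReal 0 1) {x} = 0 :=
    gaussianReal_absolutelyContinuous 0 (by norm_num : (1 : NNReal) ≠ 0)
      (measure_singleton x)
  rw [hmeas, h0] at h1
  have hle : Function.leftLim F x ≤ F x := F.mono.leftLim_le le_rfl
  have := ENNReal.ofReal_eq_zero.mp h1.symm
  linarith

lemma Phi_surj {y : ℝ} (hy : y ∈ Set.Ioo (0:ℝ) 1) : ∃ c, Phi c = y := by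
  obtain ⟨hy0, hy1⟩ := hy
  obtain ⟨A, hA⟩ := (Phi_tendsto_atBot.eventually_lt_const hy0).exists
  obtain ⟨B, hB⟩ := (Phi_tendsto_atTop.eventually_const_lt hy1).exists
  have hAB : A ≤ B := by
    by_contra h
    push_neg at h
    have := Phi_strictMono h
    linarith
  obtain ⟨c, _, hc⟩ := intermediate_value_Icc hAB Phi_continuous.continuousOn ⟨hA.le, hB.le⟩
  exact ⟨c, hc⟩

lemma PhiInv_eq {y : ℝ} (hy : y ∈ Set.Ioo (0:ℝ) 1) : Phi (PhiInv y) = y := by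
  obtain ⟨c, hc⟩ := Phi_surj hy
  exact Function.invFun_eq ⟨c, hc⟩

/-- the RDT threshold satisfies λ_γ(a) - a → Φ⁻¹(1-γ) as a → ∞. -/
theorem stmt11 (γ : ℝ) (hγ : γ ∈ Set.Ioo (0 : ℝ) 1)
    (lam : ℝ → ℝ)
    (hlam : ∀ a : ℝ, 0 ≤ a → 2 - Phi (lam a - a) - Phi (lam a + a) = γ) :
    Filter.Tendsto (fun a => lam a - a) Filter.atTop (nhds (PhiInv (1 - γ))) := by
  obtain ⟨hγ0, hγ1⟩ := hγ
  set c := PhiInv (1 - γ) with hc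
  have hΦc : Phi c = 1 - γ := PhiInv_eq ⟨by linarith, by linarith⟩
  -- lower bound: for a ≥ 0, c ≤ lam a - a
  have hlow : ∀ a : ℝ, 0 ≤ a → c ≤ lam a - a := by
    intro a ha
    have h := hlam a ha
    have h1 : Phi c ≤ Phi (lam a - a) := by
      have := Phi_le_one (lam a + a)
      rw [hΦc]; linarith
    exact (Phi_strictMono.le_iff_le).mp h1
  rw [tendsto_order]
  constructor
  · intro b hb
    filter_upwards [eventually_ge_atTop (0:ℝ)] with a ha
    exact lt_of_lt_of_le hb (hlow a ha)
  · intro b hb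
    have hΦ : Phi c < Phi b := Phi_strictMono hb
    set δ := Phi b - (1 - γ) with hδ
    have hδpos : 0 < δ := by rw [hδ, ← hΦc]; linarith
    have htend : Tendsto (fun a : ℝ => Phi (c + 2 * a)) atTop (nhds 1) :=
      Phi_tendsto_atTop.comp (tendsto_atTop_add_const_left _ c
        (tendsto_id.const_mul_atTop (by norm_num : (0:ℝ) < 2)))
    have hev : ∀ᶠ a in atTop, 1 - δ < Phi (c + 2 * a) :=
      htend.eventually_const_lt (by linarith)
    filter_upwards [hev, eventually_ge_atTop (0:ℝ)] with a hΦa ha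
    have h := hlam a ha
    have hmono : Phi (c + 2 * a) ≤ Phi (lam a + a) := by
      apply Phi_strictMono.monotone
      have := hlow a ha
      linarith
    have : Phi (lam a - a) < Phi b := by
      rw [hδ] at hΦa
      linarith
    exact (Phi_strictMono.lt_iff_lt).mp this
end
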